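/- Let X be a connected compact Hausdorff space such that every continuous complex line bundle on X is trivial. Then the algebra C(X, ℂ) is projective free: every finitely generated projective C(X,ℂ)-module of rank 1 is free. -/

import Mathlib

open Bundle ContinuousMap

set_option maxHeartbeats 1600000
set_option synthInstance.maxHeartbeats 400000

namespace LineBundleProofAux

open Matrix Topology

variable {X : Type*} [TopologicalSpace X] {n : ℕ}

/-- The pointwise evaluation of a matrix of continuous functions. -/
noncomputable def ev (F : Matrix (Fin n) (Fin n) C(X, ℂ)) (x : X) : Matrix (Fin n) (Fin n) ℂ :=
  F.map (fun f => f x)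

/-- The fiber of the associated "line bundle": the range of the evaluated matrix. -/
abbrev Fib (F : Matrix (Fin n) (Fin n) C(X, ℂ)) (x : X) : Type :=
  ↥(LinearMap.range (ev F x).mulVecLin)

/-- The canonical injection of the total space into the product. -/
def Psi (F : Matrix (Fin n) (Fin n) C(X, ℂ)) :
    TotalSpace ℂ (Fib F) → X × (Fin n → ℂ) :=
  fun p => (p.proj, (p.snd : Fin n → ℂ))

noncomputable instance instTopTotal (F : Matrix (Fin n) (Fin n) C(X, ℂ)) :
    TopologicalSpace (TotalSpace ℂ (Fib F)) :=
  TopologicalSpace.induced (Psi F) inferInstance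

lemma isInducing_psi (F : Matrix (Fin n) (Fin n) C(X, ℂ)) : IsInducing (Psi F) :=
  ⟨rfl⟩

lemma continuous_psi (F : Matrix (Fin n) (Fin n) C(X, ℂ)) : Continuous (Psi F) :=
  (isInducing_psi F).continuous

lemma ev_mul (F G : Matrix (Fin n) (Fin n) C(X, ℂ)) (x : X) :
    ev (F * G) x = ev F x * ev G x := by
  have h : (fun f : C(X, ℂ) => f x)
      = ⇑((Pi.evalRingHom (fun _ : X => ℂ) x).comp ContinuousMap.coeFnRingHom) := rfl
  rw [ev, ev, ev, h, Matrix.map_mul]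

lemma ev_idem {F : Matrix (Fin n) (Fin n) C(X, ℂ)} (hFF : F * F = F) (x : X) :
    ev F x * ev F x = ev F x := by
  rw [← ev_mul, hFF]

lemma mem_fix {F : Matrix (Fin n) (Fin n) C(X, ℂ)} (hFF : F * F = F) {x : X}
    {v : Fin n → ℂ} (hv : v ∈ LinearMap.range (ev F x).mulVecLin) :
    (ev F x) *ᵥ v = v := by
  obtain ⟨u, rfl⟩ := hv
  rw [Matrix.mulVecLin_apply, Matrix.mulVec_mulVec, ev_idem hFF]

/-- The `j`-th column of `ev F x`, as a vector. -/
noncomputable def colv (F : Matrix (Fin n) (Fin n) C(X, ℂ)) (j : Fin n) (x : X) : Fin n → ℂ :=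
  fun k => F k j x

lemma colv_mem (F : Matrix (Fin n) (Fin n) C(X, ℂ)) (j : Fin n) (x : X) :
    colv F j x ∈ LinearMap.range (ev F x).mulVecLin :=
  ⟨Pi.single j 1, by
    ext k
    simp [Matrix.mulVecLin_apply, Matrix.mulVec_single, colv, ev]⟩

lemma ratio {F : Matrix (Fin n) (Fin n) C(X, ℂ)} {x : X}
    (hr : (ev F x).rank = 1) {v w : Fin n → ℂ}
    (hv : v ∈ LinearMap.range (ev F x).mulVecLin)
    (hw : w ∈ LinearMap.range (ev F x).mulVecLin) (i k : Fin n) :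
    v i * w k = w i * v k := by
  by_cases h0 : v = 0
  · simp [h0]
  · have hv' : (⟨v, hv⟩ : Fib F x) ≠ 0 := fun h => h0 (congrArg Subtype.val h)
    have hr' : Module.finrank ℂ (Fib F x) = 1 := hr
    obtain ⟨c, hc⟩ := (finrank_eq_one_iff_of_nonzero' _ hv').mp hr' ⟨w, hw⟩
    have hc' : c • v = w := congrArg Subtype.val hc
    subst hc'
    simp only [Pi.smul_apply, smul_eq_mul]
    ring

lemma exists_idx {F : Matrix (Fin n) (Fin n) C(X, ℂ)} {x : X}
    (hr : (ev F x).rank = 1) : ∃ i j : Fin n, F i j x ≠ 0 := by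
  by_contra h
  push_neg at h
  have h0 : ev F x = 0 := by
    ext i j
    simpa [ev] using h i j
  rw [h0, Matrix.rank_zero] at hr
  exact one_ne_zero hr.symm

lemma isOpen_U (F : Matrix (Fin n) (Fin n) C(X, ℂ)) (i j : Fin n) :
    IsOpen {x : X | F i j x ≠ 0} :=
  IsOpen.preimage (F i j).continuous isOpen_compl_singleton

/-- The local trivialization of the bundle over `{x | F i j x ≠ 0}`. -/
noncomputable def triv (F : Matrix (Fin n) (Fin n) C(X, ℂ)) (hFF : F * F = F)
    (hr : ∀ x, (ev F x).rank = 1) (i j : Fin n) :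
    Trivialization ℂ (Bundle.TotalSpace.proj : TotalSpace ℂ (Fib F) → X) where
  toFun p := (p.proj, (p.snd : Fin n → ℂ) i)
  invFun q := ⟨q.1, ⟨(q.2 / F i j q.1) • colv F j q.1,
    Submodule.smul_mem _ _ (colv_mem F j q.1)⟩⟩
  source := Bundle.TotalSpace.proj ⁻¹' {x : X | F i j x ≠ 0}
  target := {x : X | F i j x ≠ 0} ×ˢ Set.univ
  map_source' := fun p hp => ⟨hp, Set.mem_univ _⟩
  map_target' := fun q hq => hq.1
  left_inv' := by
    rintro ⟨x, v⟩ hx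
    have hd : F i j x ≠ 0 := hx
    refine congrArg (TotalSpace.mk x) (Subtype.ext (funext fun k => ?_))
    have hrat : (v : Fin n → ℂ) i * colv F j x k
        = colv F j x i * (v : Fin n → ℂ) k :=
      ratio (hr x) v.2 (colv_mem F j x) i k
    have hci : colv F j x i = F i j x := rfl
    show ((v : Fin n → ℂ) i / F i j x) * colv F j x k = (v : Fin n → ℂ) k
    rw [div_mul_eq_mul_div, hrat, hci]
    exact mul_div_cancel_left₀ _ hd
  right_inv' := by
    rintro ⟨x, c⟩ ⟨hx, -⟩
    have : ((c / F i j x) • colv F j x) i = c := by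
      show (c / F i j x) * F i j x = c
      exact div_mul_cancel₀ c hx
    exact Prod.ext rfl this
  open_source := (isOpen_U F i j).preimage (continuous_fst.comp (continuous_psi F))
  open_target := (isOpen_U F i j).prod isOpen_univ
  continuousOn_toFun := by
    have h : Continuous fun p : TotalSpace ℂ (Fib F) =>
        (p.proj, (p.snd : Fin n → ℂ) i) :=
      (continuous_fst.prodMk ((continuous_apply i).comp continuous_snd)).comp
        (continuous_psi F)
    exact h.continuousOn
  continuousOn_invFun := by
    rw [(isInducing_psi F).continuousOn_iff]
    have h : ContinuousOn (fun q : X × ℂ =>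
        (q.1, (q.2 / F i j q.1) • colv F j q.1))
        ({x : X | F i j x ≠ 0} ×ˢ Set.univ) := by
      refine (continuousOn_fst).prodMk ?_
      refine ContinuousOn.smul (f := fun q : X × ℂ => q.2 / F i j q.1)
        (g := fun q : X × ℂ => colv F j q.1) ?_ ?_
      · exact continuousOn_snd.div
          (((F i j).continuous.comp continuous_fst).continuousOn)
          (fun q hq => hq.1)
      · exact (continuous_pi fun k =>
          (F k j).continuous.comp continuous_fst).continuousOn
    exact h
  baseSet := {x : X | F i j x ≠ 0}
  open_baseSet := isOpen_U F i j
  source_eq := rfl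
  target_eq := rfl
  proj_toFun := fun p hp => rfl

lemma isInducing_mk (F : Matrix (Fin n) (Fin n) C(X, ℂ)) (b : X) :
    IsInducing (@TotalSpace.mk X ℂ (Fib F) b) := by
  rw [← (isInducing_psi F).of_comp_iff]
  exact (isEmbedding_prodMkRight b).toIsInducing.comp IsInducing.subtypeVal

noncomputable def idx {F : Matrix (Fin n) (Fin n) C(X, ℂ)}
    (hr : ∀ x, (ev F x).rank = 1) (x : X) : Fin n × Fin n :=
  ⟨(exists_idx (hr x)).choose, (exists_idx (hr x)).choose_spec.choose⟩

lemma idx_spec {F : Matrix (Fin n) (Fin n) C(X, ℂ)}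
    (hr : ∀ x, (ev F x).rank = 1) (x : X) :
    F (idx hr x).1 (idx hr x).2 x ≠ 0 :=
  (exists_idx (hr x)).choose_spec.choose_spec

noncomputable def fibBundle (F : Matrix (Fin n) (Fin n) C(X, ℂ)) (hFF : F * F = F)
    (hr : ∀ x, (ev F x).rank = 1) : FiberBundle ℂ (Fib F) where
  totalSpaceMk_isInducing' := isInducing_mk F
  trivializationAtlas' := {e | ∃ i j : Fin n, e = triv F hFF hr i j}
  trivializationAt' x := triv F hFF hr (idx hr x).1 (idx hr x).2
  mem_baseSet_trivializationAt' x := idx_spec hr x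
  trivialization_mem_atlas' x := ⟨_, _, rfl⟩

end LineBundleProofAux

open LineBundleProofAux Matrix Topology in
/-- Let `X` be a connected compact Hausdorff space on which every continuous complex line
bundle is trivial (admits a global linear trivialization). Then `C(X, ℂ)` is projective
free in rank one: every finitely generated projective `C(X, ℂ)`-module of rank `1`
(presented as the range of an idempotent matrix of pointwise rank `1`) is free. -/
theorem lineBundles_trivial_imp_rank_one_free (X : Type*) [TopologicalSpace X]
    [CompactSpace X] [T2Space X] [ConnectedSpace X]
    (htriv : ∀ (E : X → Type) [TopologicalSpace (TotalSpace ℂ E)]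
      [∀ x, AddCommGroup (E x)] [∀ x, Module ℂ (E x)] [∀ x, TopologicalSpace (E x)]
      [FiberBundle ℂ E] [VectorBundle ℂ ℂ E],
      ∃ e : Trivialization ℂ (Bundle.TotalSpace.proj : TotalSpace ℂ E → X),
        Trivialization.IsLinear ℂ e ∧ e.baseSet = Set.univ) :
    ∀ (n : ℕ) (F : Matrix (Fin n) (Fin n) C(X, ℂ)), F * F = F →
      (∀ x : X, (F.map (fun f => f x)).rank = 1) →
      Nonempty (Module.Basis (Fin 1) C(X, ℂ) ↥(LinearMap.range F.mulVecLin)) := by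
  intro n F hFF hr
  have hr' : ∀ x : X, (ev F x).rank = 1 := hr
  letI := fibBundle F hFF hr'
  have hlin : ∀ i j : Fin n, (triv F hFF hr' i j).IsLinear ℂ := by
    intro i j
    exact ⟨fun b hb => ⟨fun v w => rfl, fun c v => rfl⟩⟩
  haveI hVB : VectorBundle ℂ ℂ (Fib F) := by
    refine ⟨fun e he => ?_, fun e e' he he' => ?_⟩
    · obtain ⟨i, j, rfl⟩ := he.out
      exact hlin i j
    · obtain ⟨i, j, rfl⟩ := he.out
      obtain ⟨i', j', rfl⟩ := he'.out
      haveI := hlin i j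
      haveI := hlin i' j'
      refine ContinuousOn.congr
        (f := fun b => (F i' j b / F i j b) • (ContinuousLinearMap.id ℂ ℂ)) ?_ ?_
      · exact (((F i' j).continuous.continuousOn.div
          (F i j).continuous.continuousOn (fun b hb => hb.1)).smul continuousOn_const)
      · intro b hb
        have hd : F i j b ≠ 0 := hb.1
        apply ContinuousLinearMap.ext
        intro y
        have h1 : Trivialization.coordChangeL ℂ (triv F hFF hr' i j)
            (triv F hFF hr' i' j') b y
            = ((triv F hFF hr' i' j')
              ((triv F hFF hr' i j).toPartialHomeomorph.symm (b, y))).2 :=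
          Trivialization.coordChangeL_apply' _ _ hb y
        have h2 : (((triv F hFF hr' i j).toPartialHomeomorph.symm (b, y))) =
            ⟨b, ⟨(y / F i j b) • colv F j b,
              Submodule.smul_mem _ _ (colv_mem F j b)⟩⟩ := rfl
        have h3 : Trivialization.coordChangeL ℂ (triv F hFF hr' i j)
            (triv F hFF hr' i' j') b y = (y / F i j b) * F i' j b := by
          rw [h1, h2]; rfl
        simp only [ContinuousLinearEquiv.coe_coe, ContinuousLinearMap.smul_apply,
          ContinuousLinearMap.id_apply, smul_eq_mul]
        rw [h3]
        field_simp
  obtain ⟨e, helin, hbase⟩ := htriv (Fib F)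
  haveI := helin
  set s : X → Fin n → ℂ := fun x => ((e.symm x 1 : Fib F x) : Fin n → ℂ) with hs
  have hscont : Continuous s := by
    have h1 : ContinuousOn (fun z : X × ℂ => TotalSpace.mk' ℂ z.1 (e.symm z.1 z.2))
        (e.baseSet ×ˢ Set.univ) := e.continuousOn_symm
    rw [hbase] at h1
    have h2 : Continuous (fun z : X × ℂ => TotalSpace.mk' ℂ z.1 (e.symm z.1 z.2)) := by
      rw [← continuousOn_univ]
      simpa [Set.univ_prod_univ] using h1
    have h3 : Continuous fun x : X => Psi F (TotalSpace.mk' ℂ x (e.symm x 1)) :=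
      (continuous_psi F).comp (h2.comp (continuous_id.prodMk continuous_const))
    exact continuous_snd.comp h3
  have hsne : ∀ x, s x ≠ 0 := by
    intro x hx0
    have hb : x ∈ e.baseSet := by rw [hbase]; trivial
    have h0 : (e.symm x 1 : Fib F x) = 0 := Subtype.ext hx0
    have h1 : e ⟨x, e.symm x 1⟩ = (x, 1) := e.apply_mk_symm hb 1
    rw [h0] at h1
    have h2 : (e ⟨x, (0 : Fib F x)⟩).2 = 0 := (e.linear ℂ hb).map_zero
    rw [h1] at h2
    exact one_ne_zero h2
  have hsmem : ∀ x, s x ∈ LinearMap.range (ev F x).mulVecLin := fun x => (e.symm x 1).2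
  have hsfix : ∀ x, (ev F x) *ᵥ s x = s x := fun x => mem_fix hFF (hsmem x)
  -- the entries of `s` as continuous maps
  set sC : Fin n → C(X, ℂ) :=
    fun k => ⟨fun x => s x k, (continuous_apply k).comp hscont⟩ with hsC
  set N : X → ℂ := fun x => ∑ k, s x k * (starRingEnd ℂ) (s x k) with hN
  have hNcont : Continuous N := by
    apply continuous_finset_sum
    intro k _
    exact ((continuous_apply k).comp hscont).mul
      (Complex.continuous_conj.comp ((continuous_apply k).comp hscont))
  have hNne : ∀ x, N x ≠ 0 := by
    intro x
    have hNx : N x = ((∑ k, Complex.normSq (s x k) : ℝ) : ℂ) := by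
      have h0 : N x = ∑ k, s x k * (starRingEnd ℂ) (s x k) := rfl
      rw [h0]
      push_cast
      simp [Complex.mul_conj]
    rw [hNx, Ne, Complex.ofReal_eq_zero]
    have hpos : 0 < ∑ k, Complex.normSq (s x k) := by
      obtain ⟨k, hk⟩ : ∃ k, s x k ≠ 0 := Function.ne_iff.mp (hsne x)
      exact Finset.sum_pos' (fun k _ => Complex.normSq_nonneg _)
        ⟨k, Finset.mem_univ k, Complex.normSq_pos.mpr hk⟩
    exact ne_of_gt hpos
  set w : Fin n → C(X, ℂ) := fun k => ⟨fun x => (starRingEnd ℂ) (s x k) / N x,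
    (Complex.continuous_conj.comp ((continuous_apply k).comp hscont)).div hNcont hNne⟩
    with hw
  set ψ : (Fin n → C(X, ℂ)) → C(X, ℂ) := fun v => ∑ k, v k * w k with hψdef
  have hψ : ∀ v x, ψ v x = ∑ k, (v k) x * ((starRingEnd ℂ) (s x k) / N x) := by
    intro v x
    have h1 : ψ v x = (∑ k, v k * w k) x := rfl
    rw [h1, ContinuousMap.sum_apply]
    exact Finset.sum_congr rfl fun k _ => rfl
  have hσ : sC ∈ LinearMap.range F.mulVecLin := by
    refine ⟨sC, ?_⟩
    funext k
    ext x
    have h := congrFun (hsfix x) k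
    simp only [Matrix.mulVec, dotProduct, ev, Matrix.map_apply] at h
    simp only [Matrix.mulVecLin_apply, Matrix.mulVec, dotProduct]
    rw [ContinuousMap.sum_apply]
    exact h
  have hrep : ∀ u : Fin n → C(X, ℂ), ∀ x : X, ∃ c : ℂ,
      ∀ k, (F.mulVecLin u k) x = c * s x k := by
    intro u x
    have hvx : (fun k => (F.mulVecLin u k) x) ∈ LinearMap.range (ev F x).mulVecLin := by
      refine ⟨fun j => u j x, ?_⟩
      funext k
      simp [Matrix.mulVecLin_apply, Matrix.mulVec, dotProduct, ev]
    have hsx : (⟨s x, hsmem x⟩ : Fib F x) ≠ 0 := fun h => hsne x (congrArg Subtype.val h)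
    have hr1 : Module.finrank ℂ (Fib F x) = 1 := hr' x
    obtain ⟨c, hc⟩ := (finrank_eq_one_iff_of_nonzero' _ hsx).mp hr1 ⟨_, hvx⟩
    refine ⟨c, fun k => ?_⟩
    have := congrFun (congrArg Subtype.val hc) k
    simpa using this.symm
  have hcoef : ∀ v ∈ LinearMap.range F.mulVecLin, ∀ x k,
      (v k) x = (ψ v) x * s x k := by
    rintro v ⟨u, rfl⟩ x k
    obtain ⟨c, hc⟩ := hrep u x
    have hψc : (ψ (F.mulVecLin u)) x = c := by
      rw [hψ]
      have : ∀ k, (F.mulVecLin u k) x * ((starRingEnd ℂ) (s x k) / N x)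
          = c * (s x k * (starRingEnd ℂ) (s x k)) / N x := by
        intro k; rw [hc k]; ring
      rw [Finset.sum_congr rfl (fun k _ => this k), ← Finset.sum_div, ← Finset.mul_sum]
      have hfold : (∑ k, s x k * (starRingEnd ℂ) (s x k)) = N x := rfl
      rw [hfold, mul_div_assoc, div_self (hNne x), mul_one]
    rw [hψc, hc k]
  have hψσ : ψ sC = 1 := by
    ext x
    rw [hψ]
    have hterm : ∀ k, (sC k) x * ((starRingEnd ℂ) (s x k) / N x)
        = (s x k * (starRingEnd ℂ) (s x k)) / N x := by
      intro k
      show s x k * ((starRingEnd ℂ) (s x k) / N x) = _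
      ring
    rw [Finset.sum_congr rfl (fun k _ => hterm k), ← Finset.sum_div]
    have hfold : (∑ k, s x k * (starRingEnd ℂ) (s x k)) = N x := rfl
    rw [hfold, div_self (hNne x)]
    rfl
  have hψadd : ∀ v v' : Fin n → C(X, ℂ), ψ (v + v') = ψ v + ψ v' := by
    intro v v'
    ext x
    rw [ContinuousMap.add_apply, hψ, hψ, hψ, ← Finset.sum_add_distrib]
    refine Finset.sum_congr rfl fun k _ => ?_
    show ((v k) x + (v' k) x) * ((starRingEnd ℂ) (s x k) / N x) = _
    ring
  have hψsmul : ∀ (c : C(X, ℂ)) (v : Fin n → C(X, ℂ)), ψ (c • v) = c * ψ v := by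
    intro c v
    ext x
    rw [ContinuousMap.mul_apply, hψ, hψ, Finset.mul_sum]
    refine Finset.sum_congr rfl fun k _ => ?_
    show c x * (v k) x * ((starRingEnd ℂ) (s x k) / N x)
        = c x * ((v k) x * ((starRingEnd ℂ) (s x k) / N x))
    ring
  refine ⟨Module.Basis.ofEquivFun ?_⟩
  refine
    { toFun := fun m => fun _ => ψ (m : Fin n → C(X, ℂ))
      map_add' := ?_
      map_smul' := ?_
      invFun := fun f => f 0 • (⟨sC, hσ⟩ : ↥(LinearMap.range F.mulVecLin))
      left_inv := ?_
      right_inv := ?_ }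
  · intro m m'
    funext l
    show ψ ((m : Fin n → C(X, ℂ)) + (m' : Fin n → C(X, ℂ)))
        = ψ (m : Fin n → C(X, ℂ)) + ψ (m' : Fin n → C(X, ℂ))
    exact hψadd _ _
  · intro c m
    funext l
    show ψ (c • (m : Fin n → C(X, ℂ))) = c * ψ (m : Fin n → C(X, ℂ))
    exact hψsmul _ _
  · intro m
    apply Subtype.ext
    show (ψ (m : Fin n → C(X, ℂ))) • (sC : Fin n → C(X, ℂ)) = (m : Fin n → C(X, ℂ))
    funext k
    ext x
    show (ψ (m : Fin n → C(X, ℂ))) x * (sC k) x = (m : Fin n → C(X, ℂ)) k x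
    exact (hcoef _ m.2 x k).symm
  · intro f
    funext l
    have hl : l = 0 := Subsingleton.elim l 0
    subst hl
    show ψ ((f 0 • (⟨sC, hσ⟩ : ↥(LinearMap.range F.mulVecLin)) :
        ↥(LinearMap.range F.mulVecLin)) : Fin n → C(X, ℂ)) = f 0
    have : ((f 0 • (⟨sC, hσ⟩ : ↥(LinearMap.range F.mulVecLin)) :
        ↥(LinearMap.range F.mulVecLin)) : Fin n → C(X, ℂ)) = f 0 • sC := rfl
    rw [this, hψsmul, hψσ, mul_one]
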